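/- arXiv:1802.03428 — 2 statements merged into one kernel-verified Lean document; each statement's English description precedes it below -/
import Mathlib

section
/- Consider a root-biased nonbacktracking random walk on T_d^k starting from a leaf, where k ≥ 2. For any integer t with k+2 ≤ t ≤ d^k, the walk visits the root within its first t steps with probability at least (t − k − 2)·d^{−k}/4. -/
open MeasureTheory ProbabilityTheory ENNReal
open scoped ENat Classical

namespace Frog

/-- A vertex of the full rooted `d`-ary tree of height `n`, encoded as the list
of child choices leading from the vertex back up to the root (most recent
choice first); the root is the empty list. -/
def Vtx (d n : ℕ) : Type := {l : List (Fin d) // l.length ≤ n}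

instance (d n : ℕ) : MeasurableSpace (Vtx d n) := ⊤

/-- The root of `T_d^n`. -/
def root (d n : ℕ) : Vtx d n := ⟨[], Nat.zero_le n⟩

/-- `v` is a child of `u` in `T_d^n`. -/
def IsChild {d n : ℕ} (u v : Vtx d n) : Prop := ∃ a : Fin d, v.1 = a :: u.1

/-- Adjacency in `T_d^n`. -/
def Adj {d n : ℕ} (u v : Vtx d n) : Prop := IsChild u v ∨ IsChild v u

/-- The level (distance from the root) of a vertex of `T_d^n`. -/
def level {d n : ℕ} (v : Vtx d n) : ℕ := v.1.length

/-- The degree (number of neighbours) of a vertex of `T_d^n`. -/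
def deg {d n : ℕ} (v : Vtx d n) : ℕ :=
  (if v.1.length < n then d else 0) + (if v.1 = [] then 0 else 1)

/-- The ancestor of `v` at distance `k` above it (the root if `k` exceeds the
level of `v`). -/
def anc {d n : ℕ} (v : Vtx d n) (k : ℕ) : Vtx d n :=
  ⟨v.1.drop k, by rw [List.length_drop]; exact le_trans (Nat.sub_le _ _) v.2⟩

/-! ### The tree `T_d^{H*}`: `T_d^H` with an extra vertex `y` attached to the root -/

/-- A vertex of `T_d^{H*}`: either the extra vertex `y` (encoded as `none`) or a
vertex of `T_d^H`. -/
def VtxS (d H : ℕ) : Type := Option (Vtx d H)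

instance (d H : ℕ) : MeasurableSpace (VtxS d H) := ⊤

/-- The root of `T_d^{H*}`. -/
def rootS (d H : ℕ) : VtxS d H := some (root d H)

/-- The extra vertex `y` of `T_d^{H*}`, attached to the root. -/
def yS (d H : ℕ) : VtxS d H := none

/-- Adjacency in `T_d^{H*}`. -/
def AdjS {d H : ℕ} (u v : VtxS d H) : Prop :=
  match u, v with
  | none, some w => w = root d H
  | some w, none => w = root d H
  | some u', some v' => Adj u' v'
  | none, none => False

/-- Degrees in `T_d^{H*}`. -/
def degS {d H : ℕ} (v : VtxS d H) : ℕ :=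
  match v with
  | none => 1
  | some u => (if u.1.length < H then d else 0) + 1

/-! ### Simple random walk -/

/-- `X` is a simple random walk under `P` on the graph with adjacency relation
`adj` and vertex degrees `dg`, started at `v`: its finite-dimensional
distributions are those of the nearest-neighbour walk which at each step moves
to a uniformly chosen neighbour of its current position. -/
def IsRW {V : Type*} {Ω : Type*} [MeasurableSpace Ω] (P : Measure Ω)
    (adj : V → V → Prop) (dg : V → ℕ) (X : ℕ → Ω → V) (v : V) : Prop :=
  (∀ (t : ℕ) (A : Set V), MeasurableSet {ω | X t ω ∈ A}) ∧
  ∀ (t : ℕ) (p : ℕ → V),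
    P {ω | ∀ j ≤ t, X j ω = p j} =
      (if p 0 = v then 1 else 0) *
        ∏ j ∈ Finset.range t, (if adj (p j) (p (j + 1)) then ((dg (p j) : ℝ≥0∞))⁻¹ else 0)

/-- The first time at which a trajectory `X` lies in the set `A` (with value
`∞` if this never happens). -/
noncomputable def hitTime {V : Type*} {Ω : Type*} (X : ℕ → Ω → V) (A : Set V) (ω : Ω) :
    ℝ≥0∞ :=
  ⨅ (t : ℕ) (_ : X t ω ∈ A), (t : ℝ≥0∞)

/-! ### The frog model -/

/-- Index type for the random input data of a frog model: a sleeping-frog count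
at a vertex, or the path of one frog. -/
def IdxType (V : Type) : V ⊕ V × ℕ → Type
  | Sum.inl _ => ℕ
  | Sum.inr _ => ℕ → V

instance {V : Type} [MeasurableSpace V] : ∀ x : V ⊕ V × ℕ, MeasurableSpace (IdxType V x)
  | Sum.inl _ => inferInstanceAs (MeasurableSpace ℕ)
  | Sum.inr _ => inferInstanceAs (MeasurableSpace (ℕ → V))

/-- The family of random inputs of a frog model: the counts `η v` and the frog
paths `S v i`. -/
def family {V : Type} {Ω : Type*} (η : V → Ω → ℕ) (S : V → ℕ → ℕ → Ω → V) :
    ∀ x : V ⊕ V × ℕ, Ω → IdxType V x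
  | Sum.inl v => η v
  | Sum.inr p => fun ω t => S p.1 p.2 t ω

/-- The structural hypotheses of a frog model on the graph with adjacency `adj`
and degrees `dg`: frog `i` sleeping at `v` follows (from the moment it is
woken) the path `S v i`, which is a simple random walk started at `v`, and all
the sleeping-frog counts and frog paths are jointly independent. -/
structure IsFrogModel {V : Type} [MeasurableSpace V] {Ω : Type*} [MeasurableSpace Ω]
    (P : Measure Ω) (adj : V → V → Prop) (dg : V → ℕ)
    (η : V → Ω → ℕ) (S : V → ℕ → ℕ → Ω → V) : Prop where
  meas : ∀ v, Measurable (η v)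
  srw : ∀ v i, IsRW P adj dg (S v i) v
  indep : iIndepFun (family η S) P

/-- In a (deterministic realization of a) frog model with sleeping-frog counts
`η` and frog paths `S`, where the initially awake frog is frog `0` at the start
vertex `v₀` (there are no sleeping frogs at `v₀`), `VisitedBy η S v₀ v T` says
that the vertex `v` has been visited by an awake frog within time `T`.  This is
expressed by the existence of a chain of wakings leading from the initial frog
to the vertex `v`. -/
def VisitedBy {V : Type*} (η : V → ℕ) (S : V → ℕ → ℕ → V) (v₀ v : V) (T : ℕ) : Prop :=
  ∃ (k : ℕ) (u : ℕ → V) (i : ℕ → ℕ) (s : ℕ → ℕ),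
    u 0 = v₀ ∧ u k = v ∧ s 0 = 0 ∧ s k ≤ T ∧ i 0 = 0 ∧
    (∀ j, 1 ≤ j → j < k → u j ≠ v₀ ∧ i j < η (u j)) ∧
    ∀ j < k, s j ≤ s (j + 1) ∧ S (u j) (i j) (s (j + 1) - s j) = u (j + 1)

/-- The cover time of a frog model: the first time at which every vertex has
been visited by an awake frog (`∞` if this never happens). -/
noncomputable def coverTime {V : Type*} (η : V → ℕ) (S : V → ℕ → ℕ → V) (v₀ : V) :
    ℝ≥0∞ :=
  ⨅ (T : ℕ) (_ : ∀ v, VisitedBy η S v₀ v T), (T : ℝ≥0∞)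

/-- The time at which the vertex `v` is first visited (and hence the frogs
sleeping there are woken) in a frog model. -/
noncomputable def wakeTime {V : Type*} (η : V → ℕ) (S : V → ℕ → ℕ → V) (v₀ v : V) :
    ℕ∞ :=
  ⨅ (T : ℕ) (_ : VisitedBy η S v₀ v T), (T : ℕ∞)

/-- `X` has the Poisson distribution with mean `μ`. -/
def HasPoisson {Ω : Type*} [MeasurableSpace Ω] (P : Measure Ω) (X : Ω → ℕ) (μ : ℝ) :
    Prop :=
  ∀ k : ℕ, P {ω | X ω = k} = ENNReal.ofReal (Real.exp (-μ) * μ ^ k / k.factorial)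

/-- `X` has the distribution `Ber(μ)`: the unique distribution supported on
`{⌊μ⌋, ⌈μ⌉}` with mean `μ`. -/
def HasBer {Ω : Type*} [MeasurableSpace Ω] (P : Measure Ω) (X : Ω → ℕ) (μ : ℝ) : Prop :=
  P {ω | X ω = ⌊μ⌋₊ ∨ X ω = ⌈μ⌉₊} = 1 ∧ ∫⁻ ω, (X ω : ℝ≥0∞) ∂P = ENNReal.ofReal μ

/-! ### Frog models with freezing -/

/-- The path `p` frozen upon its first arrival in the set `F`. -/
noncomputable def frozenPath {V : Type*} (F : Set V) (p : ℕ → V) : ℕ → V := fun t =>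
  if h : ∃ s, p s ∈ F then p (min t (Nat.find h)) else p t

/-- All frog paths frozen upon arrival in `F`. -/
noncomputable def frozenPaths {V : Type*} (F : Set V) (S : V → ℕ → ℕ → V) :
    V → ℕ → ℕ → V :=
  fun v i => frozenPath F (S v i)

/-- The path `p`, which freezes upon first arrival in `F`, freezes at a point
of `W`. -/
def FreezesIn {V : Type*} (F W : Set V) (p : ℕ → V) : Prop :=
  ∃ t, p t ∈ W ∧ ∀ s < t, p s ∉ F

/-- In the frog model `(η, S)` started at `v₀` in which frogs are frozen upon
arrival in the set `F`, the number of frogs that are eventually woken and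
frozen at a vertex of `W ⊆ F`. -/
noncomputable def frozenCount {V : Type*} (F W : Set V) (η : V → ℕ)
    (S : V → ℕ → ℕ → V) (v₀ : V) : ℝ≥0∞ :=
  ∑' p : V × ℕ,
    if (if p.1 = v₀ then p.2 = 0 else p.2 < η p.1) ∧
        (∃ T, VisitedBy η (frozenPaths F S) v₀ p.1 T) ∧
        FreezesIn F W (S p.1 p.2)
    then 1 else 0

/-- As `frozenCount`, but counting only frogs frozen in `W` by time `T`. -/
noncomputable def frozenCountBy {V : Type*} (F W : Set V) (η : V → ℕ)
    (S : V → ℕ → ℕ → V) (v₀ : V) (T : ℕ) : ℝ≥0∞ :=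
  ∑' p : V × ℕ,
    if (if p.1 = v₀ then p.2 = 0 else p.2 < η p.1) ∧
        ∃ sw t, VisitedBy η (frozenPaths F S) v₀ p.1 sw ∧ sw + t ≤ T ∧
          S p.1 p.2 t ∈ W ∧ ∀ s < t, S p.1 p.2 s ∉ F
    then 1 else 0

/-- The total number of times the vertex `u` is visited by an awake frog during
the time interval `[1, τ]` in the frog model `(η, S)` started at `v₀` (each
frog occupying `u` at a time `1 ≤ t ≤ τ` counts once for each such time). -/
noncomputable def visitCount {V : Type*} (η : V → ℕ) (S : V → ℕ → ℕ → V)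
    (v₀ u : V) (τ : ℕ) : ℝ≥0∞ :=
  (∑' t : ℕ, if 1 ≤ t ∧ t ≤ τ ∧ S v₀ 0 t = u then 1 else 0) +
    ∑' q : V × ℕ × ℕ,
      if q.1 ≠ v₀ ∧ q.2.1 < η q.1 ∧ q.2.2 ≤ τ ∧
          (∃ w : ℕ, (w : ℕ∞) = wakeTime η S v₀ q.1 ∧ w ≤ q.2.2 ∧
            S q.1 q.2.1 (q.2.2 - w) = u)
      then 1 else 0

/-! ### Stopped versions of the frog model -/

/-- The path `p` halted after `m` steps. -/
noncomputable def stopPath {V : Type*} (p : ℕ → V) (m : ℕ∞) : ℕ → V := fun t =>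
  p (ENat.toNat (min (t : ℕ∞) m))

/-- The frog paths of the stopped version of the frog model `(η, S)` in which
frog `(v,i)` is halted `τ v i` steps after it wakes. -/
noncomputable def stoppedS {V Ω : Type*} (S : V → ℕ → ℕ → Ω → V)
    (τ : V → ℕ → Ω → ℕ∞) : V → ℕ → ℕ → Ω → V :=
  fun v i t ω => stopPath (fun s => S v i s ω) (τ v i ω) t

/-- The wake time of the vertex `v` in the stopped version of the frog model
`(η, S)` with stopping rule `τ`. -/
noncomputable def stoppedWake {V Ω : Type*} (η : V → Ω → ℕ) (S : V → ℕ → ℕ → Ω → V)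
    (τ : V → ℕ → Ω → ℕ∞) (v₀ v : V) (ω : Ω) : ℕ∞ :=
  wakeTime (fun u => η u ω) (fun u i t => stoppedS S τ u i t ω) v₀ v

/-- The information revealed by time `t` by a frog-model-like process with wake
times `w`, sleeping-frog counts `η` and frog paths `pos` started at `v₀`: for
each vertex, its wake time truncated at `t+1`; the frog counts at the vertices
visited so far; and the trajectories up to time `t` of the frogs woken so far. -/
noncomputable def history {V Ω : Type*} (v₀ : V) (w : V → Ω → ℕ∞) (η : V → Ω → ℕ)
    (pos : V → ℕ → ℕ → Ω → V) (t : ℕ) (ω : Ω) :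
    (V → ℕ∞) × (V → ℕ) × (V → ℕ → ℕ → Option V) :=
  ⟨fun v => min (w v ω) ((t : ℕ∞) + 1),
   fun v => if w v ω ≤ (t : ℕ∞) then η v ω else 0,
   fun v i s =>
     if (if v = v₀ then i = 0 else i < η v ω) ∧ w v ω + (s : ℕ∞) ≤ (t : ℕ∞)
     then some (pos v i s ω) else none⟩

/-- `τ` defines a *stopped version* of the frog model `(η, S)` started at `v₀`:
frog `(v,i)` is halted `τ v i` steps after it is woken, where the decision to
halt a frog by any given time `t` is determined by the history of the stopped
process up to time `t`. -/
def IsStoppedVersion {V Ω : Type*} (η : V → Ω → ℕ) (S : V → ℕ → ℕ → Ω → V)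
    (v₀ : V) (τ : V → ℕ → Ω → ℕ∞) : Prop :=
  ∀ (v : V) (i : ℕ) (t : ℕ),
    ∃ B : Set ((V → ℕ∞) × (V → ℕ) × (V → ℕ → ℕ → Option V)),
      {ω | stoppedWake η S τ v₀ v ω + τ v i ω ≤ (t : ℕ∞)} =
        (fun ω => history v₀ (stoppedWake η S τ v₀) η (stoppedS S τ) t ω) ⁻¹' B

/-- The number of frogs which, in the stopped version of the frog model
`(η, S)` with stopping rule `τ`, have been halted at the vertex `u` by time
`T`. -/
noncomputable def stoppedAtCount {V Ω : Type*} (η : V → Ω → ℕ)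
    (S : V → ℕ → ℕ → Ω → V) (τ : V → ℕ → Ω → ℕ∞) (v₀ u : V) (T : ℕ) (ω : Ω) :
    ℝ≥0∞ :=
  ∑' p : V × ℕ,
    if (if p.1 = v₀ then p.2 = 0 else p.2 < η p.1 ω) ∧
        ∃ w m : ℕ, (w : ℕ∞) = stoppedWake η S τ v₀ p.1 ω ∧ (m : ℕ∞) = τ p.1 p.2 ω ∧
          w + m ≤ T ∧ S p.1 p.2 m ω = u
    then 1 else 0

/-! ### Root-biased nonbacktracking random walk -/

/-- One-step transition probabilities of the root-biased nonbacktracking random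
walk on `T_d^n`, from `cur` (having arrived from `prev`) to `next`. -/
noncomputable def rbnbStep {d n : ℕ} (prev cur next : Vtx d n) : ℝ≥0∞ :=
  if cur = root d n then
    (if next = prev then ((d : ℝ≥0∞) ^ 2)⁻¹
     else if IsChild cur next then ((d : ℝ≥0∞) + 1) / (d : ℝ≥0∞) ^ 2 else 0)
  else if level cur = n then (if IsChild next cur then 1 else 0)
  else if Adj cur next ∧ next ≠ prev then ((deg cur : ℝ≥0∞) - 1)⁻¹ else 0

/-- `X` is a root-biased nonbacktracking random walk on `T_d^n` started at `v`,
under `P`: the first step is uniform over the neighbours of `v`, and the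
subsequent steps follow the transition probabilities `rbnbStep`. -/
def IsRBNB {d n : ℕ} {Ω : Type*} [MeasurableSpace Ω] (P : Measure Ω)
    (X : ℕ → Ω → Vtx d n) (v : Vtx d n) : Prop :=
  (∀ (t : ℕ) (A : Set (Vtx d n)), MeasurableSet {ω | X t ω ∈ A}) ∧
  ∀ (t : ℕ) (p : ℕ → Vtx d n),
    P {ω | ∀ j ≤ t, X j ω = p j} =
      (if p 0 = v then 1 else 0) *
        ∏ j ∈ Finset.range t,
          (if j = 0 then (if Adj (p 0) (p 1) then ((deg (p 0) : ℝ≥0∞))⁻¹ else 0)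
           else rbnbStep (p (j - 1)) (p j) (p (j + 1)))

end Frog

namespace Frog

section Aux
variable {d k : ℕ}

lemma ne_root_of_length {v : Vtx d k} (h : v.1.length ≠ 0) : v ≠ root d k := by
  intro he; rw [he] at h; exact h rfl

lemma isChild_anc (v : Vtx d k) (m : ℕ) (hm : m < v.1.length) :
    IsChild (anc v (m + 1)) (anc v m) := by
  refine ⟨v.1.get ⟨m, hm⟩, ?_⟩
  show v.1.drop m = _ :: v.1.drop (m + 1)
  rw [List.drop_eq_getElem_cons hm]; rfl

lemma anc_length (v : Vtx d k) (m : ℕ) : (anc v m).1.length = v.1.length - m :=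
  List.length_drop

lemma ne_of_length_ne {u v : Vtx d k} (h : u.1.length ≠ v.1.length) : u ≠ v := by
  intro he; rw [he] at h; exact h rfl

lemma step_internal (hd : 1 ≤ d) {prev cur next : Vtx d k}
    (h1 : cur.1.length ≠ 0) (h2 : cur.1.length ≠ k) (hadj : Adj cur next)
    (hne : next ≠ prev) : rbnbStep prev cur next = ((d : ℝ≥0∞))⁻¹ := by
  rw [rbnbStep, if_neg (ne_root_of_length h1)]
  rw [show level cur = cur.1.length from rfl, if_neg h2, if_pos ⟨hadj, hne⟩]
  have hdeg : deg cur = d + 1 := by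
    rw [deg, if_pos (lt_of_le_of_ne cur.2 h2), if_neg ?_]
    · intro he; exact h1 (by rw [he]; rfl)
  rw [hdeg]
  norm_num

lemma step_leaf {prev cur next : Vtx d k} (h1 : cur.1.length = k) (hk : 1 ≤ k)
    (hnext : IsChild next cur) : rbnbStep prev cur next = 1 := by
  rw [rbnbStep, if_neg (ne_root_of_length (by omega))]
  rw [show level cur = cur.1.length from rfl, if_pos h1, if_pos hnext]

lemma step_up (hd : 1 ≤ d) {v : Vtx d k} (hv : v.1.length = k) {j : ℕ}
    (h1 : 1 ≤ j) (h2 : j ≤ k - 1) :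
    rbnbStep (anc v (j - 1)) (anc v j) (anc v (j + 1)) = ((d : ℝ≥0∞))⁻¹ := by
  apply step_internal hd
  · rw [anc_length, hv]; omega
  · rw [anc_length, hv]; omega
  · exact Or.inr (isChild_anc v j (by omega))
  · apply ne_of_length_ne
    rw [anc_length, anc_length, hv]
    omega

end Aux

section Exc
variable {d k : ℕ}

lemma anc_zero (v : Vtx d k) : anc v 0 = v := Subtype.ext rfl

/-- data of one excursion: depth `r+1`, sibling choice, free descent choices -/
def Exc (d k : ℕ) : Type := Σ r : Fin (k - 1), Fin (d - 1) × (Fin (r : ℕ) → Fin d)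

instance : ∀ (d k : ℕ), Fintype (Exc d k) := fun d k =>
  inferInstanceAs (Fintype (Σ r : Fin (k-1), Fin (d-1) × (Fin (r:ℕ) → Fin d)))

def exlen (e : Exc d k) : ℕ := (e.1 : ℕ) + 1

lemma exlen_pos (e : Exc d k) : 1 ≤ exlen e := Nat.le_add_left _ _
lemma exlen_lt (e : Exc d k) : exlen e < k := by
  have := e.1.2; unfold exlen; omega

def avoid (x : Fin d) (b : Fin (d - 1)) : Fin d :=
  if h : (b : ℕ) < (x : ℕ) then ⟨b, by have hx := x.2; omega⟩
  else ⟨(b : ℕ) + 1, by have := b.2; omega⟩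

lemma avoid_ne (x : Fin d) (b : Fin (d - 1)) : avoid x b ≠ x := by
  unfold avoid; split <;> (intro h; apply_fun (Fin.val) at h; simp at h; omega)

lemma avoid_inj (x : Fin d) {b b' : Fin (d - 1)} (h : avoid x b = avoid x b') : b = b' := by
  unfold avoid at h
  apply Fin.ext
  split at h <;> split at h <;> (apply_fun Fin.val at h; simp at h <;> omega)

def dflt (e : Exc d k) : Fin d := Fin.castLE (Nat.sub_le d 1) e.2.1

def newLeaf (v : Vtx d k) (e : Exc d k) : Vtx d k :=
  ⟨List.ofFn e.2.2 ++ avoid (v.1.getD (e.1 : ℕ) (dflt e)) e.2.1 :: v.1.drop ((e.1 : ℕ) + 1),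
   by
    have h1 := v.2
    have h2 := e.1.2
    simp [List.length_append, List.length_ofFn, List.length_drop]
    omega⟩

lemma newLeaf_length {v : Vtx d k} (hv : v.1.length = k) (e : Exc d k) :
    (newLeaf v e).1.length = k := by
  have h2 := e.1.2
  simp [newLeaf, List.length_append, List.length_ofFn, List.length_drop]
  omega

lemma newLeaf_drop_r (v : Vtx d k) (e : Exc d k) :
    (newLeaf v e).1.drop (e.1 : ℕ) =
      avoid (v.1.getD (e.1 : ℕ) (dflt e)) e.2.1 :: v.1.drop ((e.1 : ℕ) + 1) := by
  have h := List.drop_left (l₁ := List.ofFn e.snd.2)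
    (l₂ := avoid (v.1.getD (e.1 : ℕ) (dflt e)) e.snd.1 :: v.1.drop ((e.1 : ℕ) + 1))
  rw [List.length_ofFn] at h
  exact h

lemma newLeaf_drop (v : Vtx d k) (e : Exc d k) :
    (newLeaf v e).1.drop (exlen e) = v.1.drop (exlen e) := by
  show (newLeaf v e).1.drop ((e.1:ℕ) + 1) = v.1.drop ((e.1:ℕ) + 1)
  rw [← List.tail_drop, newLeaf_drop_r]
  rfl

lemma anc_newLeaf (v : Vtx d k) (e : Exc d k) :
    anc (newLeaf v e) (exlen e) = anc v (exlen e) := Subtype.ext (newLeaf_drop v e)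

/-- the trajectory function -/
def trajF (d k : ℕ) : Vtx d k → List (Exc d k) → ℕ → Vtx d k
  | v, [], j => anc v j
  | v, e :: es, j =>
      if j < 2 * exlen e then (if j ≤ exlen e then anc v j else anc (newLeaf v e) (2 * exlen e - j))
      else trajF d k (newLeaf v e) es (j - 2 * exlen e)

def stot (k : ℕ) {d : ℕ} (es : List (Exc d k)) : ℕ :=
  k + 2 * (es.map exlen).sum

def wsum {d k : ℕ} (es : List (Exc d k)) : ℕ := (es.map (fun e => 2 * (e.1 : ℕ) + 1)).sum

lemma stot_nil : stot k ([] : List (Exc d k)) = k := by simp [stot]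
lemma stot_cons (e : Exc d k) (es : List (Exc d k)) :
    stot k (e :: es) = 2 * exlen e + stot k es := by simp [stot]; ring
lemma stot_ge (es : List (Exc d k)) : k ≤ stot k es := Nat.le_add_right _ _

lemma trajF_nil (v : Vtx d k) (j : ℕ) : trajF d k v List.nil j = anc v j := rfl

lemma trajF_low {v : Vtx d k} {e : Exc d k} {es : List (Exc d k)} {j : ℕ} (h : j ≤ exlen e) :
    trajF d k v (e :: es) j = anc v j := by
  have := exlen_pos e
  rw [trajF, if_pos (by omega), if_pos h]

lemma trajF_zero (v : Vtx d k) (es : List (Exc d k)) : trajF d k v es 0 = v := by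
  cases es with
  | nil => exact anc_zero v
  | cons e es => rw [trajF_low (Nat.zero_le _)]; exact anc_zero v

lemma trajF_one (v : Vtx d k) (es : List (Exc d k)) : trajF d k v es 1 = anc v 1 := by
  cases es with
  | nil => rfl
  | cons e es => exact trajF_low (exlen_pos e)

lemma trajF_high {v : Vtx d k} {e : Exc d k} {es : List (Exc d k)} {j : ℕ}
    (h : 2 * exlen e ≤ j) : trajF d k v (e :: es) j = trajF d k (newLeaf v e) es (j - 2 * exlen e) := by
  rcases Nat.eq_or_lt_of_le h with h' | h'
  · rw [trajF, if_neg (by omega)]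
  · rw [trajF, if_neg (by omega)]

lemma trajF_mid {v : Vtx d k} {e : Exc d k} {es : List (Exc d k)} {j : ℕ}
    (h1 : exlen e ≤ j) (h2 : j ≤ 2 * exlen e) :
    trajF d k v (e :: es) j = anc (newLeaf v e) (2 * exlen e - j) := by
  rcases Nat.eq_or_lt_of_le h1 with h' | h'
  · subst h'
    rw [trajF_low (le_refl _)]
    rw [show 2 * exlen e - exlen e = exlen e by omega, anc_newLeaf]
  · rcases Nat.eq_or_lt_of_le h2 with h'' | h''
    · subst h''
      rw [trajF_high (le_refl _), Nat.sub_self, trajF_zero, anc_zero]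
    · rw [trajF, if_pos h'', if_neg (by omega)]

lemma trajF_last {v : Vtx d k} (hv : v.1.length = k) (es : List (Exc d k)) :
    trajF d k v es (stot k es) = root d k := by
  induction es generalizing v with
  | nil =>
    rw [stot_nil, trajF_nil]
    exact Subtype.ext (List.drop_of_length_le (le_of_eq hv))
  | cons e es ih =>
    rw [stot_cons, trajF_high (Nat.le_add_right _ _), Nat.add_sub_cancel_left]
    exact ih (newLeaf_length hv e)


/-- per-step factor -/
noncomputable def stepF (d k : ℕ) (p : ℕ → Vtx d k) (j : ℕ) : ℝ≥0∞ :=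
  if j = 0 then 1 else rbnbStep (p (j - 1)) (p j) (p (j + 1))

lemma prod_if_zero (c : ℝ≥0∞) (n : ℕ) :
    ∏ j ∈ Finset.range (n + 1), (if j = 0 then 1 else c) = c ^ n := by
  rw [Finset.prod_range_succ']
  simp

lemma factor_cons (hd : 1 ≤ d) (hk : 2 ≤ k) {v : Vtx d k} (hv : v.1.length = k)
    (e : Exc d k) (es : List (Exc d k)) {j : ℕ} (h1 : 1 ≤ j) (h2 : j < 2 * exlen e) :
    rbnbStep (trajF d k v (e :: es) (j - 1)) (trajF d k v (e :: es) j)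
      (trajF d k v (e :: es) (j + 1)) = ((d : ℝ≥0∞))⁻¹ := by
  have hℓ1 := exlen_pos e
  have hℓk := exlen_lt e
  rcases lt_trichotomy j (exlen e) with hj | hj | hj
  · -- ascending
    rw [trajF_low (by omega : j - 1 ≤ exlen e), trajF_low (le_of_lt hj),
      trajF_low (by omega : j + 1 ≤ exlen e)]
    exact step_up hd hv h1 (by omega)
  · -- turning
    subst hj
    rw [trajF_low (by omega : exlen e - 1 ≤ exlen e), trajF_low (le_refl _),
      trajF_mid (by omega) (by omega)]
    rw [show 2 * exlen e - (exlen e + 1) = (exlen e : ℕ) - 1 from by omega]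
    have hr : (e.1 : ℕ) = exlen e - 1 := by unfold exlen; omega
    apply step_internal hd
    · rw [anc_length, hv]; omega
    · rw [anc_length, hv]; omega
    · left
      refine ⟨avoid (v.1.getD (e.1 : ℕ) (dflt e)) e.2.1, ?_⟩
      show (newLeaf v e).1.drop (exlen e - 1) = _ :: v.1.drop (exlen e)
      rw [← hr, newLeaf_drop_r]
      rfl
    · -- next ≠ prev
      intro hcon
      have h3 : (newLeaf v e).1.drop (exlen e - 1) = v.1.drop (exlen e - 1) :=
        congrArg Subtype.val hcon
      rw [← hr, newLeaf_drop_r] at h3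
      have h4 : v.1.drop (e.1 : ℕ) = v.1[(e.1 : ℕ)] :: v.1.drop ((e.1 : ℕ) + 1) :=
        List.drop_eq_getElem_cons (by rw [hv]; omega)
      rw [h4] at h3
      have h5 := List.head_eq_of_cons_eq h3
      rw [List.getD_eq_getElem v.1 _ (by rw [hv]; omega)] at h5
      exact avoid_ne _ _ h5
  · -- descending
    have hw : (newLeaf v e).1.length = k := newLeaf_length hv e
    set a := 2 * exlen e - j with ha
    have ha1 : 1 ≤ a := by omega
    have ha2 : a ≤ exlen e - 1 := by omega
    rw [trajF_mid (by omega) (by omega), trajF_mid (by omega) (by omega),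
      trajF_mid (by omega) (by omega)]
    rw [show 2 * exlen e - (j - 1) = a + 1 from by omega,
      show 2 * exlen e - (j + 1) = a - 1 from by omega,
      show 2 * exlen e - j = a from by omega]
    apply step_internal hd
    · rw [anc_length, hw]; omega
    · rw [anc_length, hw]; omega
    · left
      have h := isChild_anc (newLeaf v e) (a - 1) (by rw [hw]; omega)
      rwa [show a - 1 + 1 = a from by omega] at h
    · apply ne_of_length_ne
      simp only [anc_length, hw]
      omega

lemma prod_traj (hd : 1 ≤ d) (hk : 2 ≤ k) :
    ∀ (es : List (Exc d k)) (v : Vtx d k), v.1.length = k →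
      ∏ j ∈ Finset.range (stot k es), stepF d k (trajF d k v es) j
        = ((d : ℝ≥0∞)⁻¹) ^ (k - 1 + wsum es) := by
  intro es
  induction es with
  | nil =>
    intro v hv
    have h1 : ∀ j ∈ Finset.range (stot k (List.nil (α := Exc d k))),
        stepF d k (trajF d k v List.nil) j = (if j = 0 then 1 else ((d:ℝ≥0∞))⁻¹) := by
      intro j hj
      rw [Finset.mem_range, stot_nil] at hj
      by_cases h0 : j = 0
      · simp [stepF, h0]
      · rw [stepF, if_neg h0, if_neg h0, trajF_nil, trajF_nil, trajF_nil]
        exact step_up hd hv (by omega) (by omega)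
    rw [Finset.prod_congr rfl h1, stot_nil, show k = (k - 1) + 1 from by omega,
      prod_if_zero]
    simp [wsum]
  | cons e es ih =>
    intro v hv
    have hℓ1 := exlen_pos e
    have hℓk := exlen_lt e
    have hw : (newLeaf v e).1.length = k := newLeaf_length hv e
    rw [stot_cons, Finset.prod_range_add]
    have hblock1 : ∏ j ∈ Finset.range (2 * exlen e), stepF d k (trajF d k v (e :: es)) j
        = ((d : ℝ≥0∞)⁻¹) ^ (2 * exlen e - 1) := by
      have h1 : ∀ j ∈ Finset.range (2 * exlen e),
          stepF d k (trajF d k v (e :: es)) j = (if j = 0 then 1 else ((d:ℝ≥0∞))⁻¹) := by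
        intro j hj
        rw [Finset.mem_range] at hj
        by_cases h0 : j = 0
        · simp [stepF, h0]
        · rw [stepF, if_neg h0, if_neg h0]
          exact factor_cons hd hk hv e es (by omega) hj
      rw [Finset.prod_congr rfl h1, show 2 * exlen e = (2 * exlen e - 1) + 1 from by omega,
        prod_if_zero]
      congr 1
    have hblock2 : ∀ j ∈ Finset.range (stot k es),
        stepF d k (trajF d k v (e :: es)) (2 * exlen e + j)
          = stepF d k (trajF d k (newLeaf v e) es) j := by
      intro j _
      by_cases h0 : j = 0
      · subst h0
        rw [stepF, stepF, if_pos rfl, if_neg (by omega), Nat.add_zero]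
        rw [trajF_high (by omega : 2 * exlen e ≤ 2 * exlen e + 1)]
        rw [show 2 * exlen e + 1 - 2 * exlen e = 1 from by omega, trajF_one]
        rw [trajF_high (le_refl _), Nat.sub_self, trajF_zero]
        apply step_leaf hw (by omega)
        have := isChild_anc (newLeaf v e) 0 (by omega)
        rwa [anc_zero] at this
      · rw [stepF, stepF, if_neg (by omega), if_neg h0]
        rw [trajF_high (by omega : 2 * exlen e ≤ 2 * exlen e + j - 1),
          trajF_high (by omega : 2 * exlen e ≤ 2 * exlen e + j),
          trajF_high (by omega : 2 * exlen e ≤ 2 * exlen e + j + 1)]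
        rw [show 2 * exlen e + j - 1 - 2 * exlen e = j - 1 from by omega,
          show 2 * exlen e + j - 2 * exlen e = j from by omega,
          show 2 * exlen e + j + 1 - 2 * exlen e = j + 1 from by omega]
    rw [hblock1, Finset.prod_congr rfl hblock2, ih (newLeaf v e) hw]
    rw [← pow_add]
    congr 1
    have : wsum (e :: es) = (2 * (e.1 : ℕ) + 1) + wsum es := by simp [wsum]
    unfold exlen
    rw [this]
    omega


lemma newLeaf_inj {v : Vtx d k} (hv : v.1.length = k) (hk : 2 ≤ k) {e e' : Exc d k}
    (hlen : exlen e = exlen e') (h : newLeaf v e = newLeaf v e') : e = e' := by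
  obtain ⟨r, b, c⟩ := e
  obtain ⟨r', b', c'⟩ := e'
  have hr : r = r' := Fin.ext (by unfold exlen at hlen; simpa using hlen)
  subst hr
  have hl : (List.ofFn c ++ avoid (v.1.getD (r : ℕ) (dflt ⟨r, b, c⟩)) b
        :: v.1.drop ((r : ℕ) + 1))
      = (List.ofFn c' ++ avoid (v.1.getD (r : ℕ) (dflt ⟨r, b', c'⟩)) b'
        :: v.1.drop ((r : ℕ) + 1)) := congrArg Subtype.val h
  have hlen2 : (List.ofFn c).length = (List.ofFn c').length := by simp
  obtain ⟨h1, h2⟩ := List.append_inj hl hlen2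
  have hrk : (r : ℕ) < v.1.length := by rw [hv]; have := r.2; omega
  rw [List.getD_eq_getElem v.1 _ hrk, List.getD_eq_getElem v.1 _ hrk] at h2
  have hb : b = b' := avoid_inj _ (List.head_eq_of_cons_eq h2)
  have hc : c = c' := List.ofFn_injective h1
  rw [hb, hc]

lemma traj_ne_nil_cons (hk : 2 ≤ k) {v : Vtx d k} (hv : v.1.length = k)
    (e : Exc d k) (es' : List (Exc d k)) :
    ∃ j, j ≤ stot k (List.nil (α := Exc d k)) ∧ j ≤ stot k (e :: es') ∧
      trajF d k v List.nil j ≠ trajF d k v (e :: es') j := by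
  have hℓ1 := exlen_pos e
  have hℓk := exlen_lt e
  have hst := stot_ge es'
  refine ⟨exlen e + 1, by rw [stot_nil]; omega, by rw [stot_cons]; omega, ?_⟩
  rw [trajF_nil, trajF_mid (by omega) (by omega)]
  apply ne_of_length_ne
  rw [anc_length, anc_length, hv, newLeaf_length hv]
  omega

lemma traj_ne_cons_cons_lt (hk : 2 ≤ k) {v : Vtx d k} (hv : v.1.length = k)
    {e e' : Exc d k} (es es' : List (Exc d k)) (hlt : exlen e < exlen e') :
    ∃ j, j ≤ stot k (e :: es) ∧ j ≤ stot k (e' :: es') ∧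
      trajF d k v (e :: es) j ≠ trajF d k v (e' :: es') j := by
  have hℓ1 := exlen_pos e
  have hℓk := exlen_lt e'
  have hst := stot_ge es
  have hst' := stot_ge es'
  refine ⟨exlen e + 1, by rw [stot_cons]; omega, by rw [stot_cons]; omega, ?_⟩
  rw [trajF_mid (by omega) (by omega), trajF_low (by omega : exlen e + 1 ≤ exlen e')]
  apply ne_of_length_ne
  rw [anc_length, anc_length, hv, newLeaf_length hv]
  omega

lemma traj_ne (hk : 2 ≤ k) :
    ∀ (es es' : List (Exc d k)) (v : Vtx d k), v.1.length = k → es ≠ es' →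
      ∃ j, j ≤ stot k es ∧ j ≤ stot k es' ∧ trajF d k v es j ≠ trajF d k v es' j := by
  intro es
  induction es with
  | nil =>
    intro es' v hv hne
    cases es' with
    | nil => exact absurd rfl hne
    | cons e' tl' => exact traj_ne_nil_cons hk hv e' tl'
  | cons e tl ih =>
    intro es' v hv hne
    cases es' with
    | nil =>
      obtain ⟨j, h1, h2, h3⟩ := traj_ne_nil_cons hk hv e tl
      exact ⟨j, h2, h1, h3.symm⟩
    | cons e' tl' =>
      rcases lt_trichotomy (exlen e) (exlen e') with hlt | heq | hgt
      · exact traj_ne_cons_cons_lt hk hv tl tl' hlt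
      · by_cases hee : e = e'
        · subst hee
          have htl : tl ≠ tl' := by
            intro hcon; exact hne (by rw [hcon])
          obtain ⟨j, h1, h2, h3⟩ := ih tl' (newLeaf v e) (newLeaf_length hv e) htl
          refine ⟨2 * exlen e + j, by rw [stot_cons]; omega, by rw [stot_cons]; omega, ?_⟩
          rw [trajF_high (by omega), trajF_high (by omega), Nat.add_sub_cancel_left]
          exact h3
        · refine ⟨2 * exlen e, by rw [stot_cons]; omega, by rw [stot_cons]; omega, ?_⟩
          rw [trajF_high (le_refl _), Nat.sub_self, trajF_zero,
            show (2 * exlen e) = 2 * exlen e' from by omega, trajF_high (le_refl _),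
            Nat.sub_self, trajF_zero]
          intro hcon
          exact hee (newLeaf_inj hv hk heq hcon)
      · obtain ⟨j, h1, h2, h3⟩ := traj_ne_cons_cons_lt hk hv tl' tl hgt
        exact ⟨j, h2, h1, h3.symm⟩


/-! ### The weight-sum function and its renewal recursion -/

noncomputable def wG (d k : ℕ) (T : ℕ) : ℝ≥0∞ :=
  ∑' π : {π : List (Exc d k) | 2 * (π.map exlen).sum ≤ T},
    ((d : ℝ≥0∞)⁻¹) ^ wsum (π : List (Exc d k))

lemma wG_eq_indicator (T : ℕ) :
    wG d k T = ∑' π : List (Exc d k),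
      (if 2 * (π.map exlen).sum ≤ T then ((d : ℝ≥0∞)⁻¹) ^ wsum π else 0) := by
  rw [wG, tsum_subtype {π : List (Exc d k) | 2 * (π.map exlen).sum ≤ T}
    (fun π => ((d : ℝ≥0∞)⁻¹) ^ wsum π)]
  apply tsum_congr
  intro π
  rw [Set.indicator_apply]
  congr 1

lemma wG_rec (T : ℕ) :
    wG d k T = 1 + ∑ e : Exc d k,
      (if 2 * exlen e ≤ T then
        ((d : ℝ≥0∞)⁻¹) ^ (2 * (e.1 : ℕ) + 1) * wG d k (T - 2 * exlen e) else 0) := by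
  classical
  rw [wG_eq_indicator]
  rw [ENNReal.tsum_eq_add_tsum_ite (List.nil (α := Exc d k))]
  have h0 : (if 2 * ((List.nil (α := Exc d k)).map exlen).sum ≤ T
      then ((d : ℝ≥0∞)⁻¹) ^ wsum (List.nil (α := Exc d k)) else 0) = 1 := by
    simp [wsum]
  rw [h0]
  congr 1
  have hinj : Function.Injective
      (fun p : Exc d k × List (Exc d k) => p.1 :: p.2) := by
    rintro ⟨a, b⟩ ⟨c, l⟩ h
    simp only [List.cons.injEq] at h
    exact Prod.ext h.1 h.2
  have hsupp : Function.support
      (fun π : List (Exc d k) => @ite ℝ≥0∞ (π = List.nil (α := Exc d k))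
        (Classical.propDecidable _) 0
        (if 2 * (π.map exlen).sum ≤ T then ((d : ℝ≥0∞)⁻¹) ^ wsum π else 0))
        ⊆ Set.range (fun p : Exc d k × List (Exc d k) => p.1 :: p.2) := by
    intro π hπ
    rw [Function.mem_support] at hπ
    cases π with
    | nil => simp at hπ
    | cons e tl => exact ⟨(e, tl), rfl⟩
  trans (∑' p : Exc d k × List (Exc d k),
      @ite ℝ≥0∞ ((p.1 :: p.2) = List.nil (α := Exc d k)) (Classical.propDecidable _) 0
        (if 2 * (((p.1 :: p.2)).map exlen).sum ≤ T
          then ((d : ℝ≥0∞)⁻¹) ^ wsum (p.1 :: p.2) else 0))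
  · exact (Function.Injective.tsum_eq hinj hsupp).symm
  have hstep : ∀ p : Exc d k × List (Exc d k),
      (@ite ℝ≥0∞ ((p.1 :: p.2) = List.nil (α := Exc d k)) (Classical.propDecidable _) 0
        (if 2 * (((p.1 :: p.2)).map exlen).sum ≤ T
          then ((d : ℝ≥0∞)⁻¹) ^ wsum (p.1 :: p.2) else 0))
        = (if 2 * (((p.1 :: p.2)).map exlen).sum ≤ T
          then ((d : ℝ≥0∞)⁻¹) ^ wsum (p.1 :: p.2) else 0) := by
    intro p
    rw [if_neg (by simp)]
  rw [tsum_congr hstep, ENNReal.tsum_prod']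
  rw [← tsum_fintype (L := SummationFilter.unconditional _)]
  apply tsum_congr
  intro e
  by_cases hc : 2 * exlen e ≤ T
  · rw [if_pos hc]
    have h1 : ∀ tl : List (Exc d k),
        (if 2 * (((e :: tl)).map exlen).sum ≤ T
          then ((d : ℝ≥0∞)⁻¹) ^ wsum (e :: tl) else 0)
        = ((d : ℝ≥0∞)⁻¹) ^ (2 * (e.1 : ℕ) + 1) *
          (if 2 * (tl.map exlen).sum ≤ T - 2 * exlen e
            then ((d : ℝ≥0∞)⁻¹) ^ wsum tl else 0) := by
      intro tl
      have hcond : (2 * ((e :: tl).map exlen).sum ≤ T)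
          ↔ (2 * (tl.map exlen).sum ≤ T - 2 * exlen e) := by
        simp only [List.map_cons, List.sum_cons]
        omega
      have hwsum : wsum (e :: tl) = (2 * (e.1 : ℕ) + 1) + wsum tl := by simp [wsum]
      simp only [hwsum, pow_add]
      by_cases h2 : 2 * (tl.map exlen).sum ≤ T - 2 * exlen e
      · rw [if_pos (hcond.mpr h2), if_pos h2]
      · rw [if_neg (fun hcc => h2 (hcond.mp hcc)), if_neg h2, mul_zero]
    rw [tsum_congr h1, ENNReal.tsum_mul_left]
    congr 1
    rw [wG_eq_indicator]
  · rw [if_neg hc]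
    have h1 : ∀ tl : List (Exc d k),
        (if 2 * (((e :: tl)).map exlen).sum ≤ T
          then ((d : ℝ≥0∞)⁻¹) ^ wsum (e :: tl) else 0) = 0 := by
      intro tl
      simp only [List.map_cons, List.sum_cons]
      rw [if_neg (by omega)]
    rw [tsum_congr h1]
    simp

lemma wG_rec' (T : ℕ) :
    wG d k T = 1 + ∑ r ∈ Finset.range (k - 1),
      (((d - 1) * d ^ r : ℕ) : ℝ≥0∞) *
        (if 2 * (r + 1) ≤ T then
          ((d : ℝ≥0∞)⁻¹) ^ (2 * r + 1) * wG d k (T - 2 * (r + 1)) else 0) := by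
  classical
  rw [wG_rec]
  congr 1
  rw [← Fin.sum_univ_eq_sum_range
    (fun r => (((d - 1) * d ^ r : ℕ) : ℝ≥0∞) *
        (if 2 * (r + 1) ≤ T then
          ((d : ℝ≥0∞)⁻¹) ^ (2 * r + 1) * wG d k (T - 2 * (r + 1)) else 0)) (k - 1)]
  show ∑ e : (Σ r : Fin (k-1), Fin (d-1) × (Fin (r:ℕ) → Fin d)), _ = _
  rw [← Finset.univ_sigma_univ, Finset.sum_sigma]
  apply Finset.sum_congr rfl
  intro r _
  have hex : ∀ b ∈ (Finset.univ : Finset (Fin (d-1) × (Fin (r:ℕ) → Fin d))),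
      (if 2 * exlen (⟨r, b⟩ : Exc d k) ≤ T then
          ((d : ℝ≥0∞)⁻¹) ^ (2 * ((⟨r, b⟩ : Exc d k).1 : ℕ) + 1)
            * wG d k (T - 2 * exlen (⟨r, b⟩ : Exc d k)) else 0)
        = (if 2 * ((r : ℕ) + 1) ≤ T then
          ((d : ℝ≥0∞)⁻¹) ^ (2 * (r : ℕ) + 1) * wG d k (T - 2 * ((r:ℕ) + 1)) else 0) :=
    fun b _ => rfl
  rw [Finset.sum_congr rfl hex]
  rw [Finset.sum_const]
  have hcard : (Finset.univ : Finset (Fin (d-1) × (Fin (r:ℕ) → Fin d))).card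
      = (d - 1) * d ^ (r : ℕ) := by
    simp
  rw [hcard, nsmul_eq_mul]


/-! ### Real-analytic facts -/

lemma ofReal_max_zero (v : ℝ) : ENNReal.ofReal (max v 0) = ENNReal.ofReal v := by
  rcases le_total v 0 with h | h
  · rw [max_eq_right h, ENNReal.ofReal_zero, ENNReal.ofReal_of_nonpos h]
  · rw [max_eq_left h]

lemma geom_c_sum (hd : 2 ≤ d) (m : ℕ) :
    ∑ r ∈ Finset.range m, ((d:ℝ) - 1) * ((d:ℝ)⁻¹)^(r+1) = 1 - ((d:ℝ)⁻¹)^m := by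
  have hd0 : (d:ℝ) ≠ 0 := by positivity
  induction m with
  | zero => simp
  | succ m ih =>
    rw [Finset.sum_range_succ, ih]
    field_simp
    have hx : (d:ℝ) * (1 / (d:ℝ)) = 1 := by field_simp
    linear_combination (1 / (d:ℝ)) ^ m * hx

lemma mean_c_sum (hd : 2 ≤ d) (m : ℕ) :
    ∑ r ∈ Finset.range m, ((r:ℝ) + 1) * (((d:ℝ) - 1) * ((d:ℝ)⁻¹)^(r+1)) ≤ 2 := by
  have hd2 : (2:ℝ) ≤ (d:ℝ) := by exact_mod_cast hd
  have hd0 : (0:ℝ) < d := by linarith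
  set x : ℝ := (d:ℝ)⁻¹ with hxdef
  have hx0 : 0 < x := by positivity
  have hx1 : x < 1 := by
    rw [hxdef]
    rw [inv_lt_one_iff₀]
    right; linarith
  have hxn : ‖x‖ < 1 := by rw [Real.norm_eq_abs, abs_of_pos hx0]; exact hx1
  have hs := hasSum_coe_mul_geometric_of_norm_lt_one (r := x) hxn
  have hpart : ∑ n ∈ Finset.range (m+1), (n:ℝ) * x^n ≤ x / (1-x)^2 := by
    have := Summable.sum_le_tsum (Finset.range (m+1)) (fun i _ => by positivity) hs.summable
    rwa [hs.tsum_eq] at this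
  have hre : ∑ r ∈ Finset.range m, ((r:ℝ)+1) * x^(r+1)
      = ∑ n ∈ Finset.range (m+1), (n:ℝ) * x^n := by
    rw [Finset.sum_range_succ' (fun n => (n:ℝ) * x^n) m]
    push_cast
    simp
  have hkey : ∑ r ∈ Finset.range m, ((r:ℝ)+1) * x^(r+1) ≤ x / (1-x)^2 := by
    rw [hre]; exact hpart
  have hsum : ∑ r ∈ Finset.range m, ((r:ℝ) + 1) * (((d:ℝ) - 1) * x^(r+1))
      = ((d:ℝ) - 1) * ∑ r ∈ Finset.range m, ((r:ℝ)+1) * x^(r+1) := by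
    rw [Finset.mul_sum]
    apply Finset.sum_congr rfl
    intro r _
    ring
  rw [hsum]
  have h2 : ((d:ℝ) - 1) * (x / (1-x)^2) ≤ 2 := by
    have h1x : 1 - x = ((d:ℝ) - 1) / d := by
      rw [hxdef]; field_simp
    have hdm1 : (0:ℝ) < (d:ℝ) - 1 := by linarith
    have hq : x / (1-x)^2 = (d:ℝ)/((d:ℝ)-1)^2 := by
      rw [h1x, hxdef, div_pow]
      rw [div_div_eq_mul_div]
      field_simp
    rw [hq, show ((d:ℝ)-1) * ((d:ℝ)/((d:ℝ)-1)^2) = (d:ℝ)/((d:ℝ)-1) from by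
      field_simp]
    rw [div_le_iff₀ hdm1]
    linarith
  calc ((d:ℝ) - 1) * ∑ r ∈ Finset.range m, ((r:ℝ)+1) * x^(r+1)
      ≤ ((d:ℝ) - 1) * (x / (1-x)^2) := by
        apply mul_le_mul_of_nonneg_left hkey; linarith
    _ ≤ 2 := h2

lemma cast_c (hd : 2 ≤ d) (r : ℕ) :
    (((d - 1) * d ^ r : ℕ) : ℝ≥0∞) * ((d : ℝ≥0∞)⁻¹) ^ (2 * r + 1)
      = ENNReal.ofReal (((d:ℝ) - 1) * ((d:ℝ)⁻¹)^(r+1)) := by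
  have hd0 : (d : ℝ≥0∞) ≠ 0 := by
    simp; omega
  have hdt : (d : ℝ≥0∞) ≠ ⊤ := by simp
  have hcancel : (d : ℝ≥0∞)^r * ((d : ℝ≥0∞)⁻¹)^r = 1 := by
    rw [← mul_pow, ENNReal.mul_inv_cancel hd0 hdt, one_pow]
  have hL : (((d - 1) * d ^ r : ℕ) : ℝ≥0∞) * ((d : ℝ≥0∞)⁻¹) ^ (2 * r + 1)
      = ((d - 1 : ℕ) : ℝ≥0∞) * ((d : ℝ≥0∞)⁻¹)^(r+1) := by
    rw [Nat.cast_mul, Nat.cast_pow]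
    rw [show 2 * r + 1 = r + (r + 1) from by ring, pow_add]
    calc ((d - 1 : ℕ) : ℝ≥0∞) * (d : ℝ≥0∞)^r * (((d : ℝ≥0∞)⁻¹)^r * ((d : ℝ≥0∞)⁻¹)^(r+1))
        = ((d - 1 : ℕ) : ℝ≥0∞) * ((d : ℝ≥0∞)^r * ((d : ℝ≥0∞)⁻¹)^r) * ((d : ℝ≥0∞)⁻¹)^(r+1) := by
          ring
      _ = ((d - 1 : ℕ) : ℝ≥0∞) * ((d : ℝ≥0∞)⁻¹)^(r+1) := by rw [hcancel, mul_one]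
  rw [hL]
  have h1 : ((d - 1 : ℕ) : ℝ≥0∞) = ENNReal.ofReal ((d:ℝ) - 1) := by
    rw [← ENNReal.ofReal_natCast (d-1)]
    congr 1
    push_cast [Nat.cast_sub (by omega : 1 ≤ d)]
    ring
  have h2 : ((d : ℝ≥0∞)⁻¹)^(r+1) = ENNReal.ofReal (((d:ℝ)⁻¹)^(r+1)) := by
    rw [ENNReal.ofReal_pow (by positivity)]
    congr 1
    rw [ENNReal.ofReal_inv_of_pos (by exact_mod_cast (by omega : 0 < d))]
    rw [ENNReal.ofReal_natCast]
  rw [h1, h2, ← ENNReal.ofReal_mul (by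
    have : (2:ℝ) ≤ (d:ℝ) := by exact_mod_cast hd
    linarith)]

lemma invpow_ofReal (hd : 2 ≤ d) (n : ℕ) :
    ((d : ℝ≥0∞)⁻¹) ^ n = ENNReal.ofReal (((d:ℝ)⁻¹)^n) := by
  rw [ENNReal.ofReal_pow (by positivity)]
  congr 1
  rw [ENNReal.ofReal_inv_of_pos (by exact_mod_cast (by omega : 0 < d))]
  rw [ENNReal.ofReal_natCast]

/-! ### The lower bound on `wG` -/

lemma wG_ge (hd : 2 ≤ d) (hk : 2 ≤ k) :
    ∀ T : ℕ, (T:ℝ) ≤ (d:ℝ)^k →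
      ENNReal.ofReal (((T:ℝ) - 2) / (4 * (d:ℝ))) ≤ wG d k T := by
  intro T
  induction T using Nat.strong_induction_on with
  | _ T ih =>
  intro hT
  have hd2 : (2:ℝ) ≤ (d:ℝ) := by exact_mod_cast hd
  have hd0 : (0:ℝ) < d := by linarith
  -- the real inequality
  have hS1 := geom_c_sum (d := d) hd (k-1)
  have hS2 := mean_c_sum (d := d) hd (k-1)
  have hcnonneg : ∀ r : ℕ, 0 ≤ ((d:ℝ) - 1) * ((d:ℝ)⁻¹)^(r+1) := by
    intro r
    exact mul_nonneg (by linarith) (pow_nonneg (inv_nonneg.mpr (le_of_lt hd0)) _)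
  have hxk : ((d:ℝ)⁻¹)^(k-1) * ((T:ℝ) - 2) / (4 * d) ≤ 1/4 := by
    have h1 : ((d:ℝ)⁻¹)^(k-1) * ((T:ℝ) - 2) ≤ ((d:ℝ)⁻¹)^(k-1) * (d:ℝ)^k :=
      mul_le_mul_of_nonneg_left (by linarith)
        (pow_nonneg (inv_nonneg.mpr (le_of_lt hd0)) _)
    have h2 : ((d:ℝ)⁻¹)^(k-1) * (d:ℝ)^k = d := by
      have hk1 : (d:ℝ)^k = (d:ℝ)^(k-1) * d := by
        rw [← pow_succ]
        congr 1
        omega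
      rw [hk1, ← mul_assoc, ← mul_pow, inv_mul_cancel₀ (ne_of_gt hd0), one_pow, one_mul]
    rw [div_le_iff₀ (by linarith : (0:ℝ) < 4 * (d:ℝ))]
    calc ((d:ℝ)⁻¹)^(k-1) * ((T:ℝ) - 2) ≤ ((d:ℝ)⁻¹)^(k-1) * (d:ℝ)^k := h1
      _ = (d:ℝ) := h2
      _ ≤ 1/4 * (4 * d) := by linarith
  have key : ((T:ℝ) - 2) / (4 * (d:ℝ)) ≤ 1 + ∑ r ∈ Finset.range (k-1),
      (if 2 * (r + 1) ≤ T then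
        (((d:ℝ) - 1) * ((d:ℝ)⁻¹)^(r+1)) *
          max ((((T - 2*(r+1) : ℕ) : ℝ) - 2) / (4 * (d:ℝ))) 0 else 0) := by
    have hlow : ∀ r ∈ Finset.range (k-1),
        (((d:ℝ) - 1) * ((d:ℝ)⁻¹)^(r+1)) * ((((T:ℝ) - 2*((r:ℝ)+1)) - 2) / (4 * (d:ℝ)))
          ≤ (if 2 * (r + 1) ≤ T then
            (((d:ℝ) - 1) * ((d:ℝ)⁻¹)^(r+1)) *
              max ((((T - 2*(r+1) : ℕ) : ℝ) - 2) / (4 * (d:ℝ))) 0 else 0) := by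
      intro r _
      by_cases hc : 2 * (r + 1) ≤ T
      · rw [if_pos hc]
        apply mul_le_mul_of_nonneg_left _ (hcnonneg r)
        rw [Nat.cast_sub hc]
        push_cast
        exact le_max_left _ _
      · rw [if_neg hc]
        apply mul_nonpos_of_nonneg_of_nonpos (hcnonneg r)
        have hTr : T < 2 * (r + 1) := by omega
        have hTr' : (T:ℝ) < 2*((r:ℝ)+1) := by exact_mod_cast hTr
        apply div_nonpos_of_nonpos_of_nonneg _ (by positivity)
        linarith
    have hsumlow : ∑ r ∈ Finset.range (k-1),
        (((d:ℝ) - 1) * ((d:ℝ)⁻¹)^(r+1)) * ((((T:ℝ) - 2*((r:ℝ)+1)) - 2) / (4 * (d:ℝ)))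
        ≤ ∑ r ∈ Finset.range (k-1),
          (if 2 * (r + 1) ≤ T then
            (((d:ℝ) - 1) * ((d:ℝ)⁻¹)^(r+1)) *
              max ((((T - 2*(r+1) : ℕ) : ℝ) - 2) / (4 * (d:ℝ))) 0 else 0) :=
      Finset.sum_le_sum hlow
    have hexpand : ∑ r ∈ Finset.range (k-1),
        (((d:ℝ) - 1) * ((d:ℝ)⁻¹)^(r+1)) * ((((T:ℝ) - 2*((r:ℝ)+1)) - 2) / (4 * (d:ℝ)))
        = (1 - ((d:ℝ)⁻¹)^(k-1)) * (((T:ℝ) - 2) / (4 * (d:ℝ)))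
          - (∑ r ∈ Finset.range (k-1), ((r:ℝ) + 1) * (((d:ℝ) - 1) * ((d:ℝ)⁻¹)^(r+1))) / (2*(d:ℝ)) := by
      rw [← hS1, Finset.sum_mul, Finset.sum_div, ← Finset.sum_sub_distrib]
      apply Finset.sum_congr rfl
      intro r _
      field_simp
      ring
    have hfin : ((T:ℝ) - 2) / (4 * (d:ℝ)) ≤ 1 + ((1 - ((d:ℝ)⁻¹)^(k-1)) * (((T:ℝ) - 2) / (4 * (d:ℝ)))
          - (∑ r ∈ Finset.range (k-1), ((r:ℝ) + 1) * (((d:ℝ) - 1) * ((d:ℝ)⁻¹)^(r+1))) / (2*(d:ℝ))) := by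
      have hB : (∑ r ∈ Finset.range (k-1), ((r:ℝ) + 1) * (((d:ℝ) - 1) * ((d:ℝ)⁻¹)^(r+1))) / (2*(d:ℝ))
          ≤ 1/2 := by
        rw [div_le_iff₀ (by positivity)]
        calc (∑ r ∈ Finset.range (k-1), ((r:ℝ) + 1) * (((d:ℝ) - 1) * ((d:ℝ)⁻¹)^(r+1)))
            ≤ 2 := hS2
          _ ≤ 1/2 * (2 * d) := by linarith
      have hA : ((d:ℝ)⁻¹)^(k-1) * (((T:ℝ) - 2) / (4 * (d:ℝ))) ≤ 1/4 := by
        rw [← mul_div_assoc]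
        exact hxk
      nlinarith [hA, hB]
    linarith [hsumlow, hexpand.symm.le, hexpand.le]
  -- pass to ℝ≥0∞
  rw [wG_rec' (d := d) (k := k) T]
  have hmid : ENNReal.ofReal (((T:ℝ) - 2) / (4 * (d:ℝ)))
      ≤ 1 + ∑ r ∈ Finset.range (k-1),
        (if 2 * (r + 1) ≤ T then
          ENNReal.ofReal (((d:ℝ) - 1) * ((d:ℝ)⁻¹)^(r+1)) *
            ENNReal.ofReal ((((T - 2*(r+1) : ℕ) : ℝ) - 2) / (4 * (d:ℝ))) else 0) := by
    calc ENNReal.ofReal (((T:ℝ) - 2) / (4 * (d:ℝ)))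
        ≤ ENNReal.ofReal (1 + ∑ r ∈ Finset.range (k-1),
          (if 2 * (r + 1) ≤ T then
            (((d:ℝ) - 1) * ((d:ℝ)⁻¹)^(r+1)) *
              max ((((T - 2*(r+1) : ℕ) : ℝ) - 2) / (4 * (d:ℝ))) 0 else 0)) :=
          ENNReal.ofReal_le_ofReal key
      _ = 1 + ∑ r ∈ Finset.range (k-1),
          (if 2 * (r + 1) ≤ T then
            ENNReal.ofReal (((d:ℝ) - 1) * ((d:ℝ)⁻¹)^(r+1)) *
              ENNReal.ofReal ((((T - 2*(r+1) : ℕ) : ℝ) - 2) / (4 * (d:ℝ))) else 0) := by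
          rw [ENNReal.ofReal_add (by norm_num) (Finset.sum_nonneg (fun r _ => by
            by_cases hc : 2 * (r + 1) ≤ T
            · rw [if_pos hc]
              apply mul_nonneg (hcnonneg r) (le_max_right _ _)
            · rw [if_neg hc]))]
          rw [ENNReal.ofReal_one]
          congr 1
          rw [ENNReal.ofReal_sum_of_nonneg (fun r _ => by
            by_cases hc : 2 * (r + 1) ≤ T
            · rw [if_pos hc]
              apply mul_nonneg (hcnonneg r) (le_max_right _ _)
            · rw [if_neg hc])]
          apply Finset.sum_congr rfl
          intro r _
          by_cases hc : 2 * (r + 1) ≤ T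
          · rw [if_pos hc, if_pos hc, ENNReal.ofReal_mul (hcnonneg r), ofReal_max_zero]
          · rw [if_neg hc, if_neg hc, ENNReal.ofReal_zero]
  refine le_trans hmid (add_le_add_right (Finset.sum_le_sum ?_) 1)
  intro r hr
  by_cases hc : 2 * (r + 1) ≤ T
  · rw [if_pos hc, if_pos hc, ← mul_assoc, cast_c hd r]
    apply mul_le_mul_of_nonneg_left _ (by positivity)
    apply ih (T - 2*(r+1)) (by omega)
    calc ((T - 2*(r+1) : ℕ) : ℝ) ≤ (T : ℝ) := by
          exact_mod_cast Nat.sub_le T (2*(r+1))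
      _ ≤ (d:ℝ)^k := hT
  · simp [hc]

end Exc

/-- **Hitting the root for the root-biased nonbacktracking walk (Lemma
`lem:root.miss`).**
Consider a root-biased nonbacktracking random walk on `T_d^k` starting from a
leaf, where `k ≥ 2`.  For any integer `t` with `k+2 ≤ t ≤ d^k`, the walk visits
the root within its first `t` steps with probability at least
`(t − k − 2) d^{−k} / 4`. -/
theorem rbnb_hits_root (d k : ℕ) (hd : 2 ≤ d) (hk : 2 ≤ k)
    (t : ℕ) (ht1 : k + 2 ≤ t) (ht2 : t ≤ d ^ k)
    (v0 : Vtx d k) (hleaf : level v0 = k)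
    (Ω : Type) (mΩ : MeasurableSpace Ω) (P : Measure Ω) (hP : IsProbabilityMeasure P)
    (X : ℕ → Ω → Vtx d k) (hX : IsRBNB P X v0) :
    ENNReal.ofReal (((t : ℝ) - k - 2) * ((d : ℝ) ^ k)⁻¹ / 4) ≤
      P {ω | ∃ s ≤ t, X s ω = root d k} := by
  classical
  obtain ⟨hXmeas, hXfdd⟩ := hX
  have hv0 : v0.1.length = k := hleaf
  have hd2 : (2:ℝ) ≤ (d:ℝ) := by exact_mod_cast hd
  have hd0 : (0:ℝ) < d := by linarith
  let I := {π : List (Exc d k) // stot k π ≤ t}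
  let E : I → Set Ω := fun π => {ω | ∀ j ≤ stot k π.1, X j ω = trajF d k v0 π.1 j}
  have hmeas : ∀ π : I, MeasurableSet (E π) := by
    intro π
    have hEi : E π = ⋂ (j : ℕ), ⋂ (_ : j ≤ stot k π.1),
        {ω | X j ω ∈ ({trajF d k v0 π.1 j} : Set (Vtx d k))} := by
      ext ω
      simp only [Set.mem_iInter, Set.mem_setOf_eq, Set.mem_singleton_iff]
      rfl
    rw [hEi]
    exact MeasurableSet.iInter fun j => MeasurableSet.iInter fun _ => hXmeas j _
  have hdisj : Pairwise (Function.onFun Disjoint E) := by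
    intro π π' hne
    rw [Function.onFun, Set.disjoint_left]
    intro ω h1 h2
    obtain ⟨j, hj1, hj2, hj3⟩ :=
      traj_ne hk π.1 π'.1 v0 hv0 (fun hc => hne (Subtype.ext hc))
    exact hj3 ((h1 j hj1).symm.trans (h2 j hj2))
  have hsub : (⋃ π : I, E π) ⊆ {ω | ∃ s ≤ t, X s ω = root d k} := by
    intro ω hω
    rw [Set.mem_iUnion] at hω
    obtain ⟨π, hπ⟩ := hω
    exact ⟨stot k π.1, π.2, by rw [hπ (stot k π.1) le_rfl, trajF_last hv0]⟩
  have hEeq : ∀ π : I, P (E π) = ((d:ℝ≥0∞)⁻¹) ^ (k - 1 + wsum π.1) := by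
    intro π
    have h := hXfdd (stot k π.1) (trajF d k v0 π.1)
    show P {ω | ∀ j ≤ stot k π.1, X j ω = trajF d k v0 π.1 j} = _
    rw [h, trajF_zero, if_pos rfl, one_mul]
    rw [← prod_traj (by omega : 1 ≤ d) hk π.1 v0 hv0]
    apply Finset.prod_congr rfl
    intro j _
    by_cases h0 : j = 0
    · subst h0
      rw [if_pos rfl, stepF, if_pos rfl]
      rw [trajF_one]
      have hadj : Adj v0 (anc v0 1) := by
        right
        have h' := isChild_anc v0 0 (by rw [hv0]; omega)
        rwa [anc_zero] at h'
      rw [if_pos hadj]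
      have hdeg : deg v0 = 1 := by
        rw [deg, if_neg (by rw [hv0]; omega), if_neg (by
          intro hnil
          rw [hnil] at hv0
          simp at hv0
          omega)]
      rw [hdeg]
      simp
    · rw [if_neg h0, stepF, if_neg h0]
  -- identify the sum with wG
  have hEq : wG d k (t - k) = ∑' π : I, ((d:ℝ≥0∞)⁻¹) ^ (wsum π.1) := by
    rw [wG]
    exact (Equiv.subtypeEquivRight (fun π => by
      simp only [stot, Set.mem_setOf_eq]
      omega)).tsum_eq (fun π : I => ((d:ℝ≥0∞)⁻¹) ^ (wsum π.1))
  have hcast : ((t - k : ℕ) : ℝ) = (t:ℝ) - k := by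
    rw [Nat.cast_sub (by omega)]
  have hTk : ((t - k : ℕ) : ℝ) ≤ (d:ℝ)^k := by
    have h1 : t - k ≤ d^k := le_trans (Nat.sub_le t k) ht2
    exact_mod_cast h1
  have hpow : ((d:ℝ)^k)⁻¹ = ((d:ℝ)⁻¹)^(k-1) * (d:ℝ)⁻¹ := by
    have h1 : (d:ℝ)^k = (d:ℝ)^(k-1) * d := by
      rw [← pow_succ]
      congr 1
      omega
    rw [h1, mul_inv, inv_pow]
  calc ENNReal.ofReal (((t : ℝ) - k - 2) * ((d : ℝ) ^ k)⁻¹ / 4)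
      = ((d:ℝ≥0∞)⁻¹)^(k-1)
          * ENNReal.ofReal ((((t - k : ℕ) : ℝ) - 2) / (4 * (d:ℝ))) := by
        rw [invpow_ofReal hd (k-1),
          ← ENNReal.ofReal_mul (pow_nonneg (inv_nonneg.mpr (le_of_lt hd0)) _)]
        congr 1
        rw [hcast, hpow]
        ring
    _ ≤ ((d:ℝ≥0∞)⁻¹)^(k-1) * wG d k (t - k) :=
        mul_le_mul_right (wG_ge hd hk (t - k) hTk) _
    _ = ∑' π : I, ((d:ℝ≥0∞)⁻¹) ^ (k - 1 + wsum π.1) := by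
        rw [hEq, ← ENNReal.tsum_mul_left]
        apply tsum_congr
        intro π
        rw [pow_add]
    _ = ∑' π : I, P (E π) := by
        apply tsum_congr
        intro π
        rw [hEeq π]
    _ = P (⋃ π : I, E π) := (measure_iUnion hdisj hmeas).symm
    _ ≤ P {ω | ∃ s ≤ t, X s ω = root d k} := measure_mono hsub

end Frog
end

section
/- Suppose m balls are placed uniformly and independently into n bins, with m ≥ 3n. Let Z be the number of occupied bins. Then P[Z ≤ 2n/3] ≤ e^{−m/54}. -/
open MeasureTheory ProbabilityTheory
open scoped ENNReal

/-- **Balls in bins (Lemma `lem:balls.bins`).**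
Suppose `m` balls are placed uniformly and independently into `n` bins, with
`m ≥ 3n`.  Let `Z` be the number of occupied bins.  Then
`P[Z ≤ 2n/3] ≤ e^{−m/54}`. -/
theorem balls_in_bins (m n : ℕ) (hmn : 3 * n ≤ m)
    (Ω : Type) (mΩ : MeasurableSpace Ω) (P : Measure Ω) (hP : IsProbabilityMeasure P)
    (b : Fin m → Ω → Fin n) (hmeas : ∀ i, Measurable (b i))
    (hunif : ∀ (i : Fin m) (j : Fin n), P {ω | b i ω = j} = ((n : ℝ≥0∞))⁻¹)
    (hindep : iIndepFun b P) :
    P {ω | ((Finset.univ.image fun i => b i ω).card : ℝ) ≤ 2 * n / 3} ≤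
      ENNReal.ofReal (Real.exp (-(m : ℝ) / 54)) := by
  rcases Nat.eq_zero_or_pos n with hn | hn
  · -- n = 0
    subst hn
    rcases Nat.eq_zero_or_pos m with hm | hm
    · subst hm
      have : P {ω | ((Finset.univ.image fun i : Fin 0 => b i ω).card : ℝ) ≤ 2 * (0:ℕ) / 3} ≤ 1 :=
        prob_le_one
      calc P _ ≤ 1 := prob_le_one
        _ = ENNReal.ofReal (Real.exp (-(0:ℕ) / 54)) := by norm_num
    · exfalso
      have h1 : P Set.univ = 1 := measure_univ
      have : (Set.univ : Set Ω).Nonempty := by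
        by_contra h
        rw [Set.not_nonempty_iff_eq_empty] at h
        rw [h] at h1; simp at h1
      obtain ⟨ω, -⟩ := this
      exact (b ⟨0, hm⟩ ω).elim0
  -- main case n ≥ 1
  set k := n - 2 * n / 3 with hk
  have hk1 : 1 ≤ k := by
    have : 2 * n / 3 < n := Nat.div_lt_of_lt_mul (by omega)
    omega
  have hkn : k ≤ n := Nat.sub_le _ _
  have h3k : n ≤ 3 * k := by
    have := Nat.div_mul_le_self (2 * n) 3
    omega
  have hnk : 3 * (n - k) ≤ 2 * n := by omega
  -- event inclusion
  have hsub : {ω | ((Finset.univ.image fun i => b i ω).card : ℝ) ≤ 2 * n / 3} ⊆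
      ⋃ S ∈ Finset.powersetCard k (Finset.univ : Finset (Fin n)),
        {ω | ∀ i, b i ω ∉ S} := by
    intro ω hω
    simp only [Set.mem_setOf_eq] at hω
    set T := Finset.univ.image fun i => b i ω with hT
    have hTcard : T.card ≤ 2 * n / 3 := by
      rw [Nat.le_div_iff_mul_le (by norm_num)]
      have : (T.card : ℝ) * 3 ≤ 2 * n := by
        rw [← le_div_iff₀ (by norm_num)]
        exact hω
      exact_mod_cast this
    have hTc : k ≤ Tᶜ.card := by
      rw [Finset.card_compl, Fintype.card_fin]
      omega
    obtain ⟨S, hSsub, hScard⟩ := Finset.exists_subset_card_eq hTc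
    simp only [Set.mem_iUnion, Set.mem_setOf_eq]
    refine ⟨S, Finset.mem_powersetCard_univ.mpr hScard, ?_⟩
    intro i hi
    have hmem : b i ω ∈ T := Finset.mem_image.mpr ⟨i, Finset.mem_univ i, rfl⟩
    exact (Finset.mem_compl.mp (hSsub hi)) hmem
  -- probability of a fixed set S of k bins being all empty
  have hAmeas : ∀ (i : Fin m) (A : Finset (Fin n)),
      P (b i ⁻¹' ↑A) = (A.card : ℝ≥0∞) * (n : ℝ≥0∞)⁻¹ := by
    intro i A
    have heq : (b i ⁻¹' ↑A) = ⋃ j ∈ A, {ω | b i ω = j} := by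
      ext ω; simp
    rw [heq, measure_biUnion_finset]
    · simp only [hunif]
      rw [Finset.sum_const, nsmul_eq_mul]
    · intro x _ y _ hxy
      simp only [Function.onFun, Set.disjoint_left]
      intro ω h1 h2
      simp only [Set.mem_setOf_eq] at h1 h2
      exact hxy (h1 ▸ h2 ▸ rfl)
    · intro j _
      exact (hmeas i) (MeasurableSet.of_discrete (s := {j}))
  have hSbound : ∀ S ∈ Finset.powersetCard k (Finset.univ : Finset (Fin n)),
      P {ω | ∀ i, b i ω ∉ S} ≤ (ENNReal.ofReal (2/3)) ^ m := by
    intro S hS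
    have hScard : S.card = k := Finset.mem_powersetCard_univ.mp hS
    have heq : {ω | ∀ i, b i ω ∉ S} =
        ⋂ i ∈ (Finset.univ : Finset (Fin m)), b i ⁻¹' (↑Sᶜ : Set (Fin n)) := by
      ext ω; simp
    rw [heq, hindep.measure_inter_preimage_eq_mul Finset.univ
      (fun i _ => MeasurableSet.of_discrete)]
    have hfac : ∀ i : Fin m, P (b i ⁻¹' (↑Sᶜ : Set (Fin n))) ≤ ENNReal.ofReal (2/3) := by
      intro i
      rw [hAmeas i Sᶜ]
      have hcc : Sᶜ.card = n - k := by
        rw [Finset.card_compl, Fintype.card_fin, hScard]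
      rw [hcc]
      have h1 : ((n - k : ℕ) : ℝ≥0∞) * (n : ℝ≥0∞)⁻¹ =
          ENNReal.ofReal (((n - k : ℕ) : ℝ) / n) := by
        rw [ENNReal.ofReal_div_of_pos (by exact_mod_cast hn), div_eq_mul_inv]
        simp [ENNReal.ofReal_natCast]
      rw [h1]
      apply ENNReal.ofReal_le_ofReal
      rw [div_le_iff₀ (by exact_mod_cast hn)]
      have hr : ((3 * (n - k) : ℕ) : ℝ) ≤ ((2 * n : ℕ) : ℝ) := Nat.cast_le.mpr hnk
      push_cast at hr
      linarith
    calc ∏ i : Fin m, P (b i ⁻¹' (↑Sᶜ : Set (Fin n)))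
        ≤ ∏ _i : Fin m, ENNReal.ofReal (2/3) :=
          Finset.prod_le_prod' fun i _ => hfac i
      _ = (ENNReal.ofReal (2/3)) ^ m := by
          rw [Finset.prod_const, Finset.card_univ, Fintype.card_fin]
  -- union bound
  have hmain : P {ω | ((Finset.univ.image fun i => b i ω).card : ℝ) ≤ 2 * n / 3} ≤
      (n.choose k : ℝ≥0∞) * (ENNReal.ofReal (2/3)) ^ m := by
    calc P _ ≤ P (⋃ S ∈ Finset.powersetCard k (Finset.univ : Finset (Fin n)),
          {ω | ∀ i, b i ω ∉ S}) := measure_mono hsub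
      _ ≤ ∑ S ∈ Finset.powersetCard k (Finset.univ : Finset (Fin n)),
          P {ω | ∀ i, b i ω ∉ S} := measure_biUnion_finset_le _ _
      _ ≤ ∑ _S ∈ Finset.powersetCard k (Finset.univ : Finset (Fin n)),
          (ENNReal.ofReal (2/3)) ^ m := Finset.sum_le_sum hSbound
      _ = (n.choose k : ℝ≥0∞) * (ENNReal.ofReal (2/3)) ^ m := by
          rw [Finset.sum_const, nsmul_eq_mul, Finset.card_powersetCard,
            Finset.card_univ, Fintype.card_fin]
  refine hmain.trans ?_
  -- final numeric estimate
  have hchoose : (n.choose k : ℝ) ≤ 2 ^ n := by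
    have h1 : n.choose k ≤ 2 ^ n := by
      rw [← Nat.sum_range_choose n]
      exact Finset.single_le_sum (f := fun i => n.choose i) (fun i _ => Nat.zero_le _)
        (Finset.mem_range.mpr (by omega))
    exact_mod_cast h1
  have hreal : (n.choose k : ℝ) * (2/3) ^ m ≤ Real.exp (-(m : ℝ) / 54) := by
    have hexp : Real.exp (-(m : ℝ) / 54) = (Real.exp (-(1:ℝ)/54)) ^ m := by
      rw [← Real.exp_nat_mul]; ring_nf
    have h5354 : ((53:ℝ)/54) ≤ Real.exp (-(1:ℝ)/54) := by
      have := Real.add_one_le_exp (-(1:ℝ)/54)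
      linarith
    have hstep : (n.choose k : ℝ) * (2/3) ^ m ≤ ((53:ℝ)/54) ^ m := by
      have h2 : (2:ℝ) ^ n ≤ ((53:ℝ)/36) ^ m := by
        calc (2:ℝ) ^ n ≤ (((53:ℝ)/36) ^ 3) ^ n := by
              apply pow_le_pow_left₀ (by norm_num) (by norm_num)
          _ = ((53:ℝ)/36) ^ (3 * n) := by rw [← pow_mul]
          _ ≤ ((53:ℝ)/36) ^ m := by
              apply pow_le_pow_right₀ (by norm_num) hmn
      calc (n.choose k : ℝ) * (2/3) ^ m ≤ (2:ℝ) ^ n * (2/3) ^ m := by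
            apply mul_le_mul_of_nonneg_right hchoose (by positivity)
        _ ≤ ((53:ℝ)/36) ^ m * (2/3) ^ m := by
            apply mul_le_mul_of_nonneg_right h2 (by positivity)
        _ = ((53:ℝ)/54) ^ m := by
            rw [← mul_pow]; norm_num
    refine hstep.trans ?_
    rw [hexp]
    exact pow_le_pow_left₀ (by norm_num) h5354 m
  calc (n.choose k : ℝ≥0∞) * (ENNReal.ofReal (2/3)) ^ m
      = ENNReal.ofReal ((n.choose k : ℝ) * (2/3) ^ m) := by
        rw [ENNReal.ofReal_mul (by positivity), ENNReal.ofReal_natCast,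
          ENNReal.ofReal_pow (by norm_num)]
    _ ≤ ENNReal.ofReal (Real.exp (-(m : ℝ) / 54)) := ENNReal.ofReal_le_ofReal hreal
end
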